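/- Let q : H2 → ℝ be weakly lower semicontinuous and convex with subgradient selection h(y) ∈ ∂q(y), let A : H1 → H2 be nonzero bounded linear, and suppose q(Az₀) ≤ 0 for some z₀ ∈ H1. Fix u ∈ H1 with q(Au) > 0. Then the half-space H := {z ∈ H1 : ⟨u − L_τ{P_q}(u), z − L_τ{P_q}(u)⟩ ≤ 0} equals {z ∈ H1 : q(Au) + ⟨A* h(Au), z − u⟩ ≤ 0}. -/

import Mathlib

open scoped Classical

/-- `U` is `ρ`-strongly quasi-nonexpansive. -/
def IsSQNE {H : Type*} [NormedAddCommGroup H] [InnerProductSpace ℝ H]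
    (U : H → H) (ρ : ℝ) : Prop :=
  ∀ x : H, ∀ z ∈ Function.fixedPoints U, ‖U x - z‖ ^ 2 ≤ ‖x - z‖ ^ 2 - ρ * ‖U x - x‖ ^ 2

variable {H1 H2 : Type*} [NormedAddCommGroup H1] [InnerProductSpace ℝ H1]
  [NormedAddCommGroup H2] [InnerProductSpace ℝ H2] [CompleteSpace H1] [CompleteSpace H2]

/-- The extrapolated Landweber operator corresponding to `V` and the
extrapolation functional `σ`. -/
noncomputable def Landweber (A : H1 →L[ℝ] H2) (σ : H1 → ℝ) (V : H2 → H2) : H1 → H1 :=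
  fun x => x + (σ x / ‖A‖ ^ 2) • (ContinuousLinearMap.adjoint A) (V (A x) - A x)

/-- The maximal extrapolation functional `τ`. -/
noncomputable def tauFun (A : H1 →L[ℝ] H2) (V : H2 → H2) : H1 → ℝ :=
  fun x =>
    if V (A x) ≠ A x then
      (‖A‖ * ‖V (A x) - A x‖ / ‖(ContinuousLinearMap.adjoint A) (V (A x) - A x)‖) ^ 2
    else 1

/-- The subgradient projection associated with `q` and the subgradient
selection `h`. -/
noncomputable def subgradProj {H : Type*} [NormedAddCommGroup H]
    [InnerProductSpace ℝ H] (q : H → ℝ) (h : H → H) : H → H :=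
  fun y => if q y > 0 then y - (q y / ‖h y‖ ^ 2) • h y else y

theorem stmt18 (A : H1 →L[ℝ] H2) (hA : A ≠ 0)
    (q : H2 → ℝ) (hconv : ConvexOn ℝ Set.univ q)
    (hwlsc : LowerSemicontinuous fun y : WeakSpace ℝ H2 => q y)
    (h : H2 → H2) (hh : ∀ y w : H2, q w ≥ q y + inner ℝ (h y) (w - y))
    (z₀ : H1) (hz₀ : q (A z₀) ≤ 0) (u : H1) (hu : 0 < q (A u)) :
    {z : H1 | inner ℝ (u - Landweber A (tauFun A (subgradProj q h)) (subgradProj q h) u)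
        (z - Landweber A (tauFun A (subgradProj q h)) (subgradProj q h) u) ≤ (0 : ℝ)} =
      {z : H1 | q (A u) + inner ℝ ((ContinuousLinearMap.adjoint A) (h (A u))) (z - u) ≤ (0 : ℝ)} := by
  classical
  set y := A u with hy
  set g := (ContinuousLinearMap.adjoint A) (h y) with hgdef
  set Q := q y with hQdef
  have hg : g ≠ 0 := by
    intro h0
    have h2 : (inner ℝ (h y) (A z₀ - y) : ℝ) = inner ℝ g (z₀ - u) := by
      rw [hgdef, ContinuousLinearMap.adjoint_inner_left, map_sub, hy]
    have h1 := hh y (A z₀)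
    rw [h2, h0, inner_zero_left] at h1
    linarith
  have hhy : h y ≠ 0 := by
    intro h0
    apply hg
    rw [hgdef, h0, map_zero]
  have hhn : ‖h y‖ ≠ 0 := norm_ne_zero_iff.mpr hhy
  have hgn : ‖g‖ ≠ 0 := norm_ne_zero_iff.mpr hg
  have hAn : ‖A‖ ≠ 0 := norm_ne_zero_iff.mpr hA
  have hQpos : 0 < Q := hu
  set a : ℝ := Q / ‖h y‖ ^ 2 with hadef
  have hapos : 0 < a := div_pos hQpos (by positivity)
  have hv : subgradProj q h (A u) - A u = -(a • h y) := by
    rw [subgradProj]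
    simp only [← hy, ← hQdef, if_pos hu]
    abel
  have hvne : subgradProj q h (A u) ≠ A u := by
    intro h0
    rw [sub_eq_zero.mpr h0] at hv
    exact (smul_ne_zero (ne_of_gt hapos) hhy) (neg_eq_zero.mp hv.symm)
  have hAv : (ContinuousLinearMap.adjoint A) (subgradProj q h (A u) - A u) = -(a • g) := by
    rw [hv, map_neg, map_smul, hgdef]
  have hnv : ‖subgradProj q h (A u) - A u‖ = a * ‖h y‖ := by
    rw [hv, norm_neg, norm_smul, Real.norm_of_nonneg hapos.le]
  have hnAv : ‖(ContinuousLinearMap.adjoint A) (subgradProj q h (A u) - A u)‖ = a * ‖g‖ := by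
    rw [hAv, norm_neg, norm_smul, Real.norm_of_nonneg hapos.le]
  have htau : tauFun A (subgradProj q h) u = (‖A‖ * ‖h y‖ / ‖g‖) ^ 2 := by
    rw [tauFun]
    simp only [if_pos hvne, hnv, hnAv]
    rw [show ‖A‖ * (a * ‖h y‖) = a * (‖A‖ * ‖h y‖) by ring,
      mul_div_mul_left _ _ (ne_of_gt hapos)]
  have hscal : tauFun A (subgradProj q h) u / ‖A‖ ^ 2 * a = Q / ‖g‖ ^ 2 := by
    rw [htau, hadef]
    field_simp
  set c : ℝ := Q / ‖g‖ ^ 2 with hcdef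
  have hcpos : 0 < c := div_pos hQpos (by positivity)
  have hL : Landweber A (tauFun A (subgradProj q h)) (subgradProj q h) u = u - c • g := by
    rw [Landweber]
    simp only [hAv, smul_neg, smul_smul, hscal]
    abel
  ext z
  simp only [Set.mem_setOf_eq, hL]
  have e1 : u - (u - c • g) = c • g := by abel
  have e2 : z - (u - c • g) = (z - u) + c • g := by abel
  rw [e1, e2, inner_add_right, real_inner_smul_left, real_inner_smul_left,
    real_inner_smul_right, real_inner_self_eq_norm_sq]
  have e3 : c * ‖g‖ ^ 2 = Q := by
    rw [hcdef]; field_simp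
  constructor
  · intro hle
    nlinarith [mul_pos hcpos hcpos]
  · intro hle
    nlinarith
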